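/- Let Δ be the root system of a compact semisimple Lie algebra g^C with respect to a Cartan subalgebra t^C, where t = a ⊕ t₀ is a σ-invariant Cartan subalgebra of g for an involution σ with a = (1−σ)t, t₀ = (1+σ)t. Let Δ' = {α ∈ Δ : α(t₀) = 0} and Δ₀ = {α ∈ Δ : α|_{a} = 0}. If α ∈ Δ', α̂ ∈ Δ, α ≠ α̂, and α|_a = α̂|_a, then α − α̂ ∈ Δ₀. -/

import Mathlib

open scoped RealInnerProductSpace

/-- Let `Δ` be the root system of a compact semisimple Lie
algebra with respect to a σ-invariant Cartan subalgebra `t = a ⊕ t₀`.  We realize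
the roots as vectors in the real inner product space `V` spanned by the root
vectors `A_α ∈ i·t`, so that `A ⊆ V` corresponds to `i·a` and `Aᗮ` to `i·t₀`;
`α(t₀) = 0` becomes `α ∈ A`, and `α|_a = α̂|_a` becomes equality of the orthogonal
projections onto `A`.  `Δ₀ = {α ∈ Δ : α|_a = 0}` corresponds to those roots with
vanishing projection onto `A`.  Claim: if `α ∈ Δ' = {α ∈ Δ : α(t₀) = 0}`,
`α̂ ∈ Δ`, `α ≠ α̂` and `α|_a = α̂|_a`, then `α − α̂ ∈ Δ₀`. -/
theorem statement3 {V : Type*} [NormedAddCommGroup V] [InnerProductSpace ℝ V]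
    [FiniteDimensional ℝ V]
    (Δ : Set V) (h0 : (0 : V) ∉ Δ)
    (hsym : ∀ α ∈ Δ, -α ∈ Δ)
    -- the standard property of root systems: `⟨α, β⟩ > 0` and `α ≠ β` imply `α − β` is a root
    (hrs : ∀ α ∈ Δ, ∀ β ∈ Δ, α ≠ β → 0 < ⟪α, β⟫ → α - β ∈ Δ)
    (A : Submodule ℝ V)
    (α : V) (hα : α ∈ Δ) (hαA : α ∈ A)  -- i.e. `α ∈ Δ'`: `α(t₀) = 0`
    (α' : V) (hα' : α' ∈ Δ) (hne : α ≠ α')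
    (hproj : Submodule.orthogonalProjectionOnto A α = Submodule.orthogonalProjectionOnto A α') :  -- `α|_a = α̂|_a`
    α - α' ∈ Δ ∧ Submodule.orthogonalProjectionOnto A (α - α') = 0 := by
  have hα0 : α ≠ 0 := fun h => h0 (h ▸ hα)
  have h1 : ⟪α, α'⟫ = ⟪α, α⟫ := by
    have h2 := Submodule.inner_orthogonalProjectionOnto_eq_of_mem_left (K := A) ⟨α, hαA⟩ α'
    have h3 := Submodule.inner_orthogonalProjectionOnto_eq_of_mem_left (K := A) ⟨α, hαA⟩ α
    rw [← h2, ← hproj, h3]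
  have hpos : 0 < ⟪α, α'⟫ := by
    rw [h1, real_inner_self_eq_norm_mul_norm]
    have := norm_pos_iff.mpr hα0
    positivity
  refine ⟨hrs α hα α' hα' hne hpos, ?_⟩
  rw [map_sub, hproj, sub_self]
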